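/- arXiv:2005.00298 — 2 statements merged into one kernel-verified Lean document; each statement's English description precedes it below -/
import Mathlib

section
/- Let D be a chord diagram containing a strong RII pair α = {i, j+1}, β = {i+1, j} (where i, i+1, j, j+1 are distinct points in this cyclic order), let D' be obtained from D by deleting α and β, and let k be the number of chords of D crossing α. Then X(D) = X(D') + 2k. If moreover D is evenly interlaced, then k is even and hence X(D) ≡ X(D') (mod 4). (This is the paper's claim that one strong RII move changes ⊗ by 4m for some integer m.) -/
/-- A chord diagram on `2 * n` points: a fixed-point-free involution of `ZMod (2 * n)`.
Its two-element orbits are called chords; the points lie on a circle in their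
natural cyclic order. -/
structure ChordDiagram (n : ℕ) where
  inv : ZMod (2 * n) → ZMod (2 * n)
  involutive : Function.Involutive inv
  fixedPointFree : ∀ x, inv x ≠ x

/-- A chord: an unordered pair of points of the circle `ZMod m`. -/
abbrev Chord (m : ℕ) := Sym2 (ZMod m)

/-- `x` lies in the open cyclic arc running counterclockwise from `a` to `b`. -/
def InArc {m : ℕ} (a b x : ZMod m) : Prop :=
  0 < (x - a).val ∧ (x - a).val < (b - a).val

/-- Two chords cross: exactly one endpoint of the second lies in the open cyclic arc
bounded by the first. -/
def Chord.Crosses {m : ℕ} (e f : Chord m) : Prop :=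
  ∃ a b c d : ZMod m, e = s(a, b) ∧ f = s(c, d) ∧ Xor' (InArc a b c) (InArc a b d)

/-- The set of chords of a chord diagram. -/
def ChordDiagram.chords {n : ℕ} (D : ChordDiagram n) : Set (Chord (2 * n)) :=
  {e | ∃ x, e = s(x, D.inv x)}

/-- `P` is an (unordered) pair of crossing chords of `D`. -/
def ChordDiagram.IsCrossingPair {n : ℕ} (D : ChordDiagram n)
    (P : Finset (Chord (2 * n))) : Prop :=
  P.card = 2 ∧ (∀ e ∈ P, e ∈ D.chords) ∧
    ∀ e ∈ P, ∀ f ∈ P, e ≠ f → Chord.Crosses e f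

/-- `P` is an (unordered) triple of pairwise crossing chords of `D`. -/
def ChordDiagram.IsTripleChord {n : ℕ} (D : ChordDiagram n)
    (P : Finset (Chord (2 * n))) : Prop :=
  P.card = 3 ∧ (∀ e ∈ P, e ∈ D.chords) ∧
    ∀ e ∈ P, ∀ f ∈ P, e ≠ f → Chord.Crosses e f

/-- `P` is an H-triple of `D`: a triple `{a, b, c}` of chords of `D` such that `c`
crosses both `a` and `b` while `a` and `b` do not cross. -/
def ChordDiagram.IsHTriple {n : ℕ} (D : ChordDiagram n)
    (P : Finset (Chord (2 * n))) : Prop :=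
  P.card = 3 ∧ (∀ e ∈ P, e ∈ D.chords) ∧
    ∃ c ∈ P, (∀ e ∈ P, e ≠ c → Chord.Crosses c e) ∧
      ∀ a ∈ P, ∀ b ∈ P, a ≠ c → b ≠ c → a ≠ b → ¬ Chord.Crosses a b

/-- `X D`: the number of unordered pairs of chords of `D` that cross. -/
noncomputable def ChordDiagram.X {n : ℕ} (D : ChordDiagram n) : ℕ :=
  Set.ncard {P | D.IsCrossingPair P}

/-- `T D`: the number of unordered triples of chords of `D` that pairwise cross. -/
noncomputable def ChordDiagram.T {n : ℕ} (D : ChordDiagram n) : ℕ :=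
  Set.ncard {P | D.IsTripleChord P}

/-- `H D`: the number of H-triples of `D`. -/
noncomputable def ChordDiagram.H {n : ℕ} (D : ChordDiagram n) : ℕ :=
  Set.ncard {P | D.IsHTriple P}

/-- `D'` is obtained from `D` by deleting the set `S` of chords: deletion removes the
chords of `S` together with their endpoints and reindexes the remaining points
preserving their cyclic order; in particular it induces a bijection between the
remaining chords of `D` and the chords of `D'` preserving all crossing relations. -/
def ChordDiagram.DeletionOf {n n' : ℕ} (D : ChordDiagram n) (S : Set (Chord (2 * n)))
    (D' : ChordDiagram n') : Prop :=
  ∃ φ : {e : Chord (2 * n) // e ∈ D.chords ∧ e ∉ S} ≃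
      {e : Chord (2 * n') // e ∈ D'.chords},
    ∀ e f, Chord.Crosses e.1 f.1 ↔ Chord.Crosses (φ e).1 (φ f).1

/-- Four points occurring in this (strict counterclockwise) cyclic order;
in particular they are pairwise distinct. -/
def CyclicOrd4 {m : ℕ} (a b c d : ZMod m) : Prop :=
  0 < (b - a).val ∧ (b - a).val < (c - a).val ∧ (c - a).val < (d - a).val

/-- Six points occurring in this (strict counterclockwise) cyclic order;
in particular they are pairwise distinct. -/
def CyclicOrd6 {m : ℕ} (a b c d e f : ZMod m) : Prop :=
  0 < (b - a).val ∧ (b - a).val < (c - a).val ∧ (c - a).val < (d - a).val ∧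
    (d - a).val < (e - a).val ∧ (e - a).val < (f - a).val

/-- `D` is evenly interlaced: every chord of `D` crosses an even number of chords
of `D` (true for the Gauss diagram of every knot projection). -/
def ChordDiagram.EvenlyInterlaced {n : ℕ} (D : ChordDiagram n) : Prop :=
  ∀ e ∈ D.chords, Even (Set.ncard {f | f ∈ D.chords ∧ Chord.Crosses e f})

/-- Exactly two of the three propositions hold. -/
def ExactlyTwo (A B C : Prop) : Prop :=
  (A ∧ B ∧ ¬ C) ∨ (A ∧ ¬ B ∧ C) ∨ (¬ A ∧ B ∧ C)

/-- A strong RIII move: the three pairwise crossing chords `{p, q+1}`, `{q, r+1}`,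
`{r, p+1}` (where `p, p+1, q, q+1, r, r+1` occur in this cyclic order) are replaced by
the three chords `{p+1, q}`, `{q+1, r}`, `{r+1, p}`, all other chords being unchanged. -/
def ChordDiagram.StrongRIII {n : ℕ} (D D' : ChordDiagram n) : Prop :=
  ∃ p q r : ZMod (2 * n), CyclicOrd6 p (p + 1) q (q + 1) r (r + 1) ∧
    s(p, q + 1) ∈ D.chords ∧ s(q, r + 1) ∈ D.chords ∧ s(r, p + 1) ∈ D.chords ∧
    D'.chords = (D.chords \ {s(p, q + 1), s(q, r + 1), s(r, p + 1)}) ∪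
      {s(p + 1, q), s(q + 1, r), s(r + 1, p)}


section Helpers

section Geo
variable {m : ℕ} [NeZero m]

lemma val_sub_rel (a w x : ZMod m) :
    (x - w).val = if (w - a).val ≤ (x - a).val then (x - a).val - (w - a).val
      else (x - a).val + m - (w - a).val := by
  have hu : (((x - a).val : ℕ) : ZMod m) = x - a := ZMod.natCast_rightInverse _
  have hv : (((w - a).val : ℕ) : ZMod m) = w - a := ZMod.natCast_rightInverse _
  have hum : (x - a).val < m := ZMod.val_lt _
  have hvm : (w - a).val < m := ZMod.val_lt _
  split_ifs with h
  · have hxw : x - w = (((x - a).val - (w - a).val : ℕ) : ZMod m) := by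
      rw [Nat.cast_sub h, hu, hv]; ring
    rw [hxw, ZMod.val_cast_of_lt (by omega)]
  · have hxw : x - w = (((x - a).val + m - (w - a).val : ℕ) : ZMod m) := by
      rw [Nat.cast_sub (by omega), Nat.cast_add, hu, ZMod.natCast_self, hv]; ring
    rw [hxw, ZMod.val_cast_of_lt (by omega)]

lemma vne {x y : ZMod m} (a : ZMod m) (h : x ≠ y) : (x - a).val ≠ (y - a).val := by
  intro hv
  exact h (by have := ZMod.val_injective m hv; exact sub_left_inj.mp this)

lemma vne' {x y a : ZMod m} (h : (x - a).val ≠ (y - a).val) : x ≠ y :=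
  fun hxy => h (by rw [hxy])

lemma vpos {x a : ZMod m} (h : x ≠ a) : 0 < (x - a).val := by
  rcases Nat.eq_zero_or_pos (x - a).val with h0 | h0
  · exact absurd (sub_eq_zero.mp ((ZMod.val_eq_zero _).mp h0)) h
  · exact h0

lemma vpos' {x a : ZMod m} (h : 0 < (x - a).val) : x ≠ a := by
  rintro rfl
  rw [sub_self, ZMod.val_zero] at h
  omega

lemma inArc_flip {a b x : ZMod m} (hab : a ≠ b) (hxa : x ≠ a) (hxb : x ≠ b) :
    InArc b a x ↔ ¬ InArc a b x := by
  unfold InArc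
  rw [val_sub_rel a b a, val_sub_rel a b x]
  simp only [sub_self, ZMod.val_zero]
  have h1 : 0 < (b - a).val := vpos (Ne.symm hab)
  have h2 : 0 < (x - a).val := vpos hxa
  have h3 : (x - a).val ≠ (b - a).val := vne a hxb
  have h4 : (b - a).val < m := ZMod.val_lt _
  have h5 : (x - a).val < m := ZMod.val_lt _
  split_ifs <;> omega

lemma xor_not_iff {P Q : Prop} : Xor' (¬ P) (¬ Q) ↔ Xor' P Q := by
  unfold Xor' Xor; tauto

lemma xor_comm' {P Q : Prop} : Xor' P Q → Xor' Q P := by unfold Xor' Xor; tauto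

lemma crosses_iff {a b c d : ZMod m} (hab : a ≠ b) (hca : c ≠ a) (hcb : c ≠ b)
    (hda : d ≠ a) (hdb : d ≠ b) :
    Chord.Crosses s(a, b) s(c, d) ↔ Xor' (InArc a b c) (InArc a b d) := by
  constructor
  · rintro ⟨a', b', c', d', he, hf, hx⟩
    rw [Sym2.eq_iff] at he hf
    have hx2 : Xor' (InArc a' b' c) (InArc a' b' d) := by
      rcases hf with ⟨rfl, rfl⟩ | ⟨rfl, rfl⟩
      · exact hx
      · exact xor_comm' hx
    rcases he with ⟨rfl, rfl⟩ | ⟨rfl, rfl⟩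
    · exact hx2
    · rw [inArc_flip hab hca hcb, inArc_flip hab hda hdb] at hx2
      exact xor_not_iff.mp hx2
  · intro h; exact ⟨a, b, c, d, rfl, rfl, h⟩

lemma crosses_symm {a b c d : ZMod m} (hab : a ≠ b) (hcd : c ≠ d) (hca : c ≠ a)
    (hcb : c ≠ b) (hda : d ≠ a) (hdb : d ≠ b) :
    Chord.Crosses s(a, b) s(c, d) → Chord.Crosses s(c, d) s(a, b) := by
  rw [crosses_iff hab hca hcb hda hdb,
    crosses_iff hcd (Ne.symm hca) (Ne.symm hda) (Ne.symm hcb) (Ne.symm hdb)]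
  unfold Xor' Xor InArc
  rw [val_sub_rel a c a, val_sub_rel a c b, val_sub_rel a c d]
  simp only [sub_self, ZMod.val_zero]
  have h1 : 0 < (b - a).val := vpos (Ne.symm hab)
  have h2 : 0 < (c - a).val := vpos hca
  have h3 : 0 < (d - a).val := vpos hda
  have h4 : (c - a).val ≠ (b - a).val := vne a hcb
  have h5 : (d - a).val ≠ (b - a).val := vne a hdb
  have h6 : (c - a).val ≠ (d - a).val := vne a hcd
  have h7 : (b - a).val < m := ZMod.val_lt _
  have h8 : (c - a).val < m := ZMod.val_lt _
  have h9 : (d - a).val < m := ZMod.val_lt _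
  split_ifs <;> omega

lemma inArc_succ {c d x : ZMod m} (hxc : x ≠ c) (hx1c : x + 1 ≠ c) (hx1d : x + 1 ≠ d) :
    InArc c d x ↔ InArc c d (x + 1) := by
  have hp : (x - c).val < m := ZMod.val_lt _
  have hne : (x - c).val ≠ m - 1 := by
    intro h
    apply hx1c
    have h2 : x - c = ((m - 1 : ℕ) : ZMod m) := by
      rw [← h]; exact (ZMod.natCast_rightInverse _).symm
    have hm : (0:ℕ) < m := Nat.pos_of_ne_zero (NeZero.ne m)
    rw [Nat.cast_sub hm, ZMod.natCast_self, Nat.cast_one, zero_sub] at h2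
    have h3 : x = c - 1 := by linear_combination h2
    rw [h3]; ring
  have hval : (x + 1 - c).val = (x - c).val + 1 := by
    have h4 : x + 1 - c = (((x - c).val + 1 : ℕ) : ZMod m) := by
      push_cast
      rw [ZMod.natCast_rightInverse]
      ring
    rw [h4, ZMod.val_cast_of_lt (by omega)]
  unfold InArc
  rw [hval]
  have h1 : 0 < (x - c).val := vpos hxc
  have h2 : (x + 1 - c).val ≠ (d - c).val := vne c hx1d
  rw [hval] at h2
  omega

end Geo

lemma not_crosses_self {m : ℕ} (e : Chord m) : ¬ Chord.Crosses e e := by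
  rintro ⟨a, b, c, d, he, hf, hx⟩
  rw [he, Sym2.eq_iff] at hf
  have hA : ¬ InArc a b a := by unfold InArc; simp
  have hB : ¬ InArc a b b := by unfold InArc; omega
  rcases hf with ⟨rfl, rfl⟩ | ⟨rfl, rfl⟩ <;> rcases hx with ⟨h, -⟩ | ⟨h, -⟩ <;> tauto

section ChordLemmas
variable {n : ℕ} {D : ChordDiagram n}

lemma chord_inv {x y : ZMod (2 * n)} (h : s(x, y) ∈ D.chords) : D.inv x = y := by
  obtain ⟨z, hz⟩ := h
  rw [Sym2.eq_iff] at hz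
  rcases hz with ⟨rfl, rfl⟩ | ⟨h1, rfl⟩
  · rfl
  · rw [h1, D.involutive]

lemma endpoint_det {e : Chord (2 * n)} (he : e ∈ D.chords) {x : ZMod (2 * n)}
    (hx : x ∈ e) : e = s(x, D.inv x) := by
  obtain ⟨z, rfl⟩ := he
  rw [Sym2.mem_iff] at hx
  rcases hx with rfl | rfl
  · rfl
  · rw [D.involutive z]; exact Sym2.eq_swap

lemma chord_rep {e : Chord (2 * n)} (he : e ∈ D.chords) :
    ∃ x y, e = s(x, y) ∧ x ≠ y ∧ y = D.inv x := by
  obtain ⟨z, rfl⟩ := he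
  exact ⟨z, D.inv z, rfl, Ne.symm (D.fixedPointFree z), rfl⟩

lemma chords_eq_of_mem {e f : Chord (2 * n)} (he : e ∈ D.chords) (hf : f ∈ D.chords)
    {x : ZMod (2 * n)} (hx : x ∈ e) (hx' : x ∈ f) : e = f := by
  rw [endpoint_det he hx, endpoint_det hf hx']

end ChordLemmas

open scoped Classical in
/-- Map induced on chords by a deletion (junk value outside the domain). -/
noncomputable def delMap {n n' : ℕ} (D : ChordDiagram n) (S : Set (Chord (2 * n)))
    (D' : ChordDiagram n')
    (φ : {e : Chord (2 * n) // e ∈ D.chords ∧ e ∉ S} ≃ {e : Chord (2 * n') // e ∈ D'.chords}) :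
    Chord (2 * n) → Chord (2 * n') := fun e =>
  if h : e ∈ D.chords ∧ e ∉ S then (φ ⟨e, h⟩).1 else s(0, 0)

lemma delMap_pos {n n' : ℕ} (D : ChordDiagram n) (S : Set (Chord (2 * n)))
    (D' : ChordDiagram n')
    (φ : {e : Chord (2 * n) // e ∈ D.chords ∧ e ∉ S} ≃ {e : Chord (2 * n') // e ∈ D'.chords})
    (e : Chord (2 * n)) (h : e ∈ D.chords ∧ e ∉ S) :
    delMap D S D' φ e = (φ ⟨e, h⟩).1 := dif_pos h

lemma deletion_X {n n' : ℕ} (D : ChordDiagram n) (S : Set (Chord (2 * n)))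
    (D' : ChordDiagram n') (hdel : D.DeletionOf S D') :
    D'.X = Set.ncard {P | D.IsCrossingPair P ∧ ∀ e ∈ P, e ∉ S} := by
  classical
  obtain ⟨φ, hφ⟩ := hdel
  set g := delMap D S D' φ with hg
  have gpos : ∀ (e : Chord (2 * n)) (h : e ∈ D.chords ∧ e ∉ S), g e = (φ ⟨e, h⟩).1 := by
    intro e h
    rw [hg]
    exact delMap_pos D S D' φ e h
  have ginj : ∀ e1 e2 : Chord (2 * n), (e1 ∈ D.chords ∧ e1 ∉ S) → (e2 ∈ D.chords ∧ e2 ∉ S) →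
      g e1 = g e2 → e1 = e2 := by
    intro e1 e2 h1 h2 h
    rw [gpos e1 h1, gpos e2 h2] at h
    exact Subtype.mk_eq_mk.mp (φ.injective (Subtype.ext h))
  have memprop : ∀ P : Finset (Chord (2 * n)), D.IsCrossingPair P → (∀ e ∈ P, e ∉ S) →
      ∀ e ∈ P, e ∈ D.chords ∧ e ∉ S := fun P hP hS e he => ⟨hP.2.1 e he, hS e he⟩
  have hAimg : (fun P : Finset (Chord (2 * n)) => P.image g) ''
      {P | D.IsCrossingPair P ∧ ∀ e ∈ P, e ∉ S} = {P' | D'.IsCrossingPair P'} := by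
    ext P'
    simp only [Set.mem_image, Set.mem_setOf_eq]
    constructor
    · rintro ⟨P, ⟨⟨hcard, hch, hcr⟩, hnS⟩, rfl⟩
      obtain ⟨x, y, hxy, rfl⟩ := Finset.card_eq_two.mp hcard
      have hx : x ∈ D.chords ∧ x ∉ S :=
        memprop _ ⟨hcard, hch, hcr⟩ hnS x (by simp)
      have hy : y ∈ D.chords ∧ y ∉ S :=
        memprop _ ⟨hcard, hch, hcr⟩ hnS y (by simp)
      refine ⟨?_, ?_, ?_⟩
      · rw [Finset.image_insert, Finset.image_singleton]
        exact Finset.card_pair (fun h => hxy (ginj x y hx hy h))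
      · intro f hf
        obtain ⟨e, he, rfl⟩ := Finset.mem_image.mp hf
        rw [Finset.mem_insert, Finset.mem_singleton] at he
        rcases he with rfl | rfl
        · rw [gpos e hx]; exact (φ ⟨e, hx⟩).2
        · rw [gpos e hy]; exact (φ ⟨e, hy⟩).2
      · intro f1 hf1 f2 hf2 hne
        obtain ⟨e1, he1, rfl⟩ := Finset.mem_image.mp hf1
        obtain ⟨e2, he2, rfl⟩ := Finset.mem_image.mp hf2
        rw [Finset.mem_insert, Finset.mem_singleton] at he1 he2
        rcases he1 with rfl | rfl <;> rcases he2 with rfl | rfl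
        · exact absurd rfl hne
        · rw [gpos e1 hx, gpos e2 hy]
          exact (hφ ⟨e1, hx⟩ ⟨e2, hy⟩).mp (hcr e1 (by simp) e2 (by simp) hxy)
        · rw [gpos e1 hy, gpos e2 hx]
          exact (hφ ⟨e1, hy⟩ ⟨e2, hx⟩).mp (hcr e1 (by simp) e2 (by simp) (Ne.symm hxy))
        · exact absurd rfl hne
    · rintro ⟨hcard, hch, hcr⟩
      obtain ⟨x', y', hxy', rfl⟩ := Finset.card_eq_two.mp hcard
      set u := φ.symm ⟨x', hch x' (by simp)⟩ with hu
      set v := φ.symm ⟨y', hch y' (by simp)⟩ with hv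
      have hφu : φ u = ⟨x', hch x' (by simp)⟩ := by rw [hu]; exact φ.apply_symm_apply _
      have hφv : φ v = ⟨y', hch y' (by simp)⟩ := by rw [hv]; exact φ.apply_symm_apply _
      have huv : u.1 ≠ v.1 := by
        intro h
        have h2 := φ.symm.injective (hu ▸ hv ▸ Subtype.ext h :
          φ.symm ⟨x', hch x' (by simp)⟩ = φ.symm ⟨y', hch y' (by simp)⟩)
        exact hxy' (Subtype.mk_eq_mk.mp h2)
      have hgu : g u.1 = x' := by
        rw [gpos u.1 u.2]
        exact congrArg Subtype.val hφu
      have hgv : g v.1 = y' := by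
        rw [gpos v.1 v.2]
        exact congrArg Subtype.val hφv
      have hc1 : Chord.Crosses u.1 v.1 := by
        refine (hφ u v).mpr ?_
        rw [hφu, hφv]
        exact hcr x' (by simp) y' (by simp) hxy'
      have hc2 : Chord.Crosses v.1 u.1 := by
        refine (hφ v u).mpr ?_
        rw [hφu, hφv]
        exact hcr y' (by simp) x' (by simp) (Ne.symm hxy')
      refine ⟨{u.1, v.1}, ⟨⟨Finset.card_pair huv, ?_, ?_⟩, ?_⟩, ?_⟩
      · intro f hf
        rw [Finset.mem_insert, Finset.mem_singleton] at hf
        rcases hf with rfl | rfl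
        · exact u.2.1
        · exact v.2.1
      · intro e1 h1 e2 h2 hne
        rw [Finset.mem_insert, Finset.mem_singleton] at h1 h2
        rcases h1 with rfl | rfl <;> rcases h2 with rfl | rfl
        · exact absurd rfl hne
        · exact hc1
        · exact hc2
        · exact absurd rfl hne
      · intro e he
        rw [Finset.mem_insert, Finset.mem_singleton] at he
        rcases he with rfl | rfl
        · exact u.2.2
        · exact v.2.2
      · rw [Finset.image_insert, Finset.image_singleton, hgu, hgv]
  have hAinj : Set.InjOn (fun P : Finset (Chord (2 * n)) => P.image g)
      {P | D.IsCrossingPair P ∧ ∀ e ∈ P, e ∉ S} := by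
    rintro P ⟨hP, hPS⟩ Q ⟨hQ, hQS⟩ h
    have h' : P.image g = Q.image g := h
    ext e
    constructor
    · intro he
      have hmem : g e ∈ Q.image g := h' ▸ Finset.mem_image_of_mem g he
      obtain ⟨e', he', hge⟩ := Finset.mem_image.mp hmem
      rw [ginj e' e (memprop Q hQ hQS e' he') (memprop P hP hPS e he) hge] at he'
      exact he'
    · intro he
      have hmem : g e ∈ P.image g := h' ▸ Finset.mem_image_of_mem g he
      obtain ⟨e', he', hge⟩ := Finset.mem_image.mp hmem
      rw [ginj e' e (memprop P hP hPS e' he') (memprop Q hQ hQS e he) hge] at he'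
      exact he'
  rw [ChordDiagram.X, ← hAimg, Set.ncard_image_of_injOn hAinj]

end Helpers

/-- deleting a strong RII pair `α = {i, j+1}`, `β = {i+1, j}` changes `X`
by `2k`, where `k` is the number of chords of `D` crossing `α`; if `D` is evenly
interlaced then `k` is even, so `X(D) ≡ X(D') (mod 4)`. -/
theorem strong_RII_changes_X_by_4m (n : ℕ) (D : ChordDiagram (n + 2)) (D' : ChordDiagram n)
    (i j : ZMod (2 * (n + 2)))
    (hord : CyclicOrd4 i (i + 1) j (j + 1))
    (hα : s(i, j + 1) ∈ D.chords) (hβ : s(i + 1, j) ∈ D.chords)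
    (hdel : D.DeletionOf {s(i, j + 1), s(i + 1, j)} D')
    (k : ℕ) (hk : k = Set.ncard {e | e ∈ D.chords ∧ Chord.Crosses e s(i, j + 1)}) :
    D.X = D'.X + 2 * k ∧
      (D.EvenlyInterlaced → Even k ∧ D.X ≡ D'.X [MOD 4]) := by
  classical
  haveI : NeZero (2 * (n + 2)) := ⟨by omega⟩
  obtain ⟨hv1, hv12, hv23⟩ := hord
  have n_i1_i : i + 1 ≠ i := vpos' hv1
  have n_j_i : j ≠ i := vpos' (by omega)
  have n_j1_i : j + 1 ≠ i := vpos' (by omega)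
  have n_j_i1 : j ≠ i + 1 := vne' (a := i) (by omega)
  have n_j1_i1 : j + 1 ≠ i + 1 := vne' (a := i) (by omega)
  have n_j1_j : j + 1 ≠ j := vne' (a := i) (by omega)
  have hinvi : D.inv i = j + 1 := chord_inv hα
  have hinvi1 : D.inv (i + 1) = j := chord_inv hβ
  have hinvj1 : D.inv (j + 1) = i := by rw [← hinvi, D.involutive]
  have hinvj : D.inv j = i + 1 := by rw [← hinvi1, D.involutive]
  have nαβ : s(i, j + 1) ≠ s(i + 1, j) := by
    rw [Ne, Sym2.eq_iff]
    rintro (⟨h, -⟩ | ⟨-, h⟩)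
    · exact n_i1_i h.symm
    · exact n_j1_i1 h
  have avoid : ∀ e ∈ D.chords, e ≠ s(i, j + 1) → e ≠ s(i + 1, j) →
      ∃ c d : ZMod (2 * (n + 2)), e = s(c, d) ∧ c ≠ d ∧
        c ≠ i ∧ c ≠ i + 1 ∧ c ≠ j ∧ c ≠ j + 1 ∧
        d ≠ i ∧ d ≠ i + 1 ∧ d ≠ j ∧ d ≠ j + 1 := by
    intro e he h1 h2
    obtain ⟨c, d, rfl, hcd, -⟩ := chord_rep he
    have key : ∀ x ∈ s(c, d), x ≠ i ∧ x ≠ i + 1 ∧ x ≠ j ∧ x ≠ j + 1 := by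
      intro x hx
      refine ⟨fun h => h1 ?_, fun h => h2 ?_, fun h => h2 ?_, fun h => h1 ?_⟩
      · rw [endpoint_det he hx, h, hinvi]
      · rw [endpoint_det he hx, h, hinvi1]
      · rw [endpoint_det he hx, h, hinvj]; exact Sym2.eq_swap
      · rw [endpoint_det he hx, h, hinvj1]; exact Sym2.eq_swap
    obtain ⟨c1, c2, c3, c4⟩ := key c (Sym2.mem_mk_left c d)
    obtain ⟨d1, d2, d3, d4⟩ := key d (Sym2.mem_mk_right c d)
    exact ⟨c, d, rfl, hcd, c1, c2, c3, c4, d1, d2, d3, d4⟩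
  have symmD : ∀ e ∈ D.chords, ∀ f ∈ D.chords, e ≠ f →
      Chord.Crosses e f → Chord.Crosses f e := by
    intro e he f hf hef hc
    obtain ⟨x, y, rfl, hxy, -⟩ := chord_rep he
    obtain ⟨z, w, rfl, hzw, -⟩ := chord_rep hf
    have disj : ∀ p : ZMod (2 * (n + 2)), p ∈ s(z, w) → p ∈ s(x, y) → False :=
      fun p hp hq => hef (chords_eq_of_mem he hf hq hp)
    exact crosses_symm hxy hzw
      (fun h => disj z (Sym2.mem_mk_left z w) (by rw [h]; exact Sym2.mem_mk_left x y))
      (fun h => disj z (Sym2.mem_mk_left z w) (by rw [h]; exact Sym2.mem_mk_right x y))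
      (fun h => disj w (Sym2.mem_mk_right z w) (by rw [h]; exact Sym2.mem_mk_left x y))
      (fun h => disj w (Sym2.mem_mk_right z w) (by rw [h]; exact Sym2.mem_mk_right x y))
      hc
  have ncαβ : ¬ Chord.Crosses s(i, j + 1) s(i + 1, j) := by
    rw [crosses_iff (Ne.symm n_j1_i) n_i1_i (Ne.symm n_j1_i1) n_j_i (Ne.symm n_j1_j)]
    intro hx
    unfold Xor' at hx
    rcases hx with ⟨-, h⟩ | ⟨-, h⟩
    · exact h (by unfold InArc; omega)
    · exact h (by unfold InArc; omega)
  have ncβα : ¬ Chord.Crosses s(i + 1, j) s(i, j + 1) := fun h =>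
    ncαβ (crosses_symm (Ne.symm n_j_i1) (Ne.symm n_j1_i) (Ne.symm n_i1_i) (Ne.symm n_j_i)
      n_j1_i1 n_j1_j h)
  have Keq : {e | e ∈ D.chords ∧ Chord.Crosses e s(i + 1, j)} =
      {e | e ∈ D.chords ∧ Chord.Crosses e s(i, j + 1)} := by
    ext e
    simp only [Set.mem_setOf_eq]
    refine and_congr_right fun he => ?_
    by_cases h1 : e = s(i, j + 1)
    · subst h1
      exact iff_of_false ncαβ (not_crosses_self _)
    by_cases h2 : e = s(i + 1, j)
    · subst h2
      exact iff_of_false (not_crosses_self _) ncβα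
    obtain ⟨c, d, rfl, hcd, hci, hci1, hcj, hcj1, hdi, hdi1, hdj, hdj1⟩ := avoid e he h1 h2
    rw [crosses_iff hcd (Ne.symm hci1) (Ne.symm hdi1) (Ne.symm hcj) (Ne.symm hdj),
      crosses_iff hcd (Ne.symm hci) (Ne.symm hdi) (Ne.symm hcj1) (Ne.symm hdj1),
      inArc_succ (Ne.symm hci) (Ne.symm hci1) (Ne.symm hdi1),
      inArc_succ (Ne.symm hcj) (Ne.symm hcj1) (Ne.symm hdj1)]
  have pairSet : ∀ γ ∈ D.chords, {P | D.IsCrossingPair P ∧ γ ∈ P} =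
      (fun e => ({γ, e} : Finset (Chord (2 * (n + 2))))) ''
        {e | e ∈ D.chords ∧ Chord.Crosses e γ} := by
    intro γ hγ
    ext P
    simp only [Set.mem_setOf_eq, Set.mem_image]
    constructor
    · rintro ⟨⟨hcard, hch, hcr⟩, hmem⟩
      obtain ⟨x, y, hxy, rfl⟩ := Finset.card_eq_two.mp hcard
      rw [Finset.mem_insert, Finset.mem_singleton] at hmem
      rcases hmem with rfl | rfl
      · exact ⟨y, ⟨hch y (by simp), hcr y (by simp) γ (by simp) (Ne.symm hxy)⟩, rfl⟩
      · exact ⟨x, ⟨hch x (by simp), hcr x (by simp) γ (by simp) hxy⟩, Finset.pair_comm γ x⟩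
    · rintro ⟨e, ⟨hech, hcre⟩, rfl⟩
      have hne : e ≠ γ := fun h => not_crosses_self γ (h ▸ hcre)
      refine ⟨⟨Finset.card_pair (Ne.symm hne), ?_, ?_⟩, by simp⟩
      · intro f hf
        rw [Finset.mem_insert, Finset.mem_singleton] at hf
        rcases hf with rfl | rfl
        · exact hγ
        · exact hech
      · intro e1 h1 e2 h2 hne12
        rw [Finset.mem_insert, Finset.mem_singleton] at h1 h2
        rcases h1 with h1 | h1 <;> rcases h2 with h2 | h2
        · exact absurd (h1.trans h2.symm) hne12
        · rw [h1, h2]; exact symmD e hech γ hγ hne hcre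
        · rw [h1, h2]; exact hcre
        · exact absurd (h1.trans h2.symm) hne12
  have pairInj : ∀ γ : Chord (2 * (n + 2)),
      Set.InjOn (fun e => ({γ, e} : Finset (Chord (2 * (n + 2)))))
        {e | e ∈ D.chords ∧ Chord.Crosses e γ} := by
    intro γ e1 h1 e2 h2 h
    have hne1 : e1 ≠ γ := fun hh => not_crosses_self γ (hh ▸ h1.2)
    have h' : ({γ, e1} : Finset (Chord (2 * (n + 2)))) = {γ, e2} := h
    have hm : e1 ∈ ({γ, e2} : Finset (Chord (2 * (n + 2)))) :=
      h' ▸ (by simp : e1 ∈ ({γ, e1} : Finset (Chord (2 * (n + 2)))))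
    rw [Finset.mem_insert, Finset.mem_singleton] at hm
    rcases hm with h'' | h''
    · exact absurd h'' hne1
    · exact h''
  have hBαcard : Set.ncard {P | D.IsCrossingPair P ∧ s(i, j + 1) ∈ P} = k := by
    rw [pairSet _ hα, Set.ncard_image_of_injOn (pairInj _), hk]
  have hBβcard : Set.ncard {P | D.IsCrossingPair P ∧ s(i + 1, j) ∈ P} = k := by
    rw [pairSet _ hβ, Set.ncard_image_of_injOn (pairInj _), Keq, hk]
  have hAcard : D'.X = Set.ncard {P | D.IsCrossingPair P ∧ ∀ e ∈ P,
      e ∉ ({s(i, j + 1), s(i + 1, j)} : Set (Chord (2 * (n + 2))))} :=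
    deletion_X D _ D' hdel
  have hunion : {P | D.IsCrossingPair P} =
      ({P | D.IsCrossingPair P ∧ s(i, j + 1) ∈ P} ∪
        {P | D.IsCrossingPair P ∧ s(i + 1, j) ∈ P}) ∪
      {P | D.IsCrossingPair P ∧ ∀ e ∈ P,
        e ∉ ({s(i, j + 1), s(i + 1, j)} : Set (Chord (2 * (n + 2))))} := by
    ext P
    simp only [Set.mem_union, Set.mem_setOf_eq]
    constructor
    · intro hP
      by_cases h1 : s(i, j + 1) ∈ P
      · exact Or.inl (Or.inl ⟨hP, h1⟩)
      by_cases h2 : s(i + 1, j) ∈ P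
      · exact Or.inl (Or.inr ⟨hP, h2⟩)
      · refine Or.inr ⟨hP, fun e he hS => ?_⟩
        rcases Set.mem_insert_iff.mp hS with rfl | hS'
        · exact h1 he
        · rw [Set.mem_singleton_iff] at hS'
          subst hS'
          exact h2 he
    · rintro ((⟨h, -⟩ | ⟨h, -⟩) | ⟨h, -⟩) <;> exact h
  have hd1 : Disjoint {P | D.IsCrossingPair P ∧ s(i, j + 1) ∈ P}
      {P | D.IsCrossingPair P ∧ s(i + 1, j) ∈ P} := by
    rw [Set.disjoint_left]
    rintro P ⟨hP, h1⟩ ⟨-, h2⟩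
    exact ncαβ (hP.2.2 _ h1 _ h2 nαβ)
  have hd2 : Disjoint ({P | D.IsCrossingPair P ∧ s(i, j + 1) ∈ P} ∪
      {P | D.IsCrossingPair P ∧ s(i + 1, j) ∈ P})
      {P | D.IsCrossingPair P ∧ ∀ e ∈ P,
        e ∉ ({s(i, j + 1), s(i + 1, j)} : Set (Chord (2 * (n + 2))))} := by
    rw [Set.disjoint_left]
    rintro P (⟨-, h1⟩ | ⟨-, h1⟩) ⟨-, h2⟩
    · exact h2 _ h1 (Set.mem_insert _ _)
    · exact h2 _ h1 (Set.mem_insert_iff.mpr (Or.inr rfl))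
  have hXD : D.X = k + k + D'.X := by
    rw [ChordDiagram.X, hunion,
      Set.ncard_union_eq hd2 (Set.toFinite _) (Set.toFinite _),
      Set.ncard_union_eq hd1 (Set.toFinite _) (Set.toFinite _),
      hBαcard, hBβcard, ← hAcard]
  refine ⟨by omega, ?_⟩
  intro hEI
  have hsym : {f | f ∈ D.chords ∧ Chord.Crosses s(i, j + 1) f} =
      {e | e ∈ D.chords ∧ Chord.Crosses e s(i, j + 1)} := by
    ext f
    simp only [Set.mem_setOf_eq]
    refine and_congr_right fun hf => ?_
    by_cases h : f = s(i, j + 1)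
    · subst h; exact Iff.rfl
    · exact ⟨symmD _ hα _ hf (Ne.symm h), symmD _ hf _ hα h⟩
  have hke : Even k := by
    rw [hk, ← hsym]
    exact hEI _ hα
  refine ⟨hke, ?_⟩
  obtain ⟨t, ht⟩ := hke
  show D.X % 4 = D'.X % 4
  omega
end

section
/- Let D be a chord diagram containing a strong RII pair α = {i, j+1}, β = {i+1, j} (where i, i+1, j, j+1 are distinct points in this cyclic order), and let D' be obtained from D by deleting α and β. Then T(D) ≡ T(D') (mod 2). (This is the paper's claim that one strong RII move changes the triple-chord count by an even number.) -/
section Aux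

lemma valSub {m : ℕ} [NeZero m] (x a : ZMod m) :
    (x - a).val = if a.val ≤ x.val then x.val - a.val else x.val + m - a.val := by
  have hx := ZMod.val_lt x
  have ha := ZMod.val_lt a
  rw [sub_eq_add_neg, ZMod.val_add, ZMod.neg_val]
  rcases eq_or_ne a 0 with rfl | h0
  · simp [Nat.mod_eq_of_lt hx]
  · rw [if_neg h0]
    have ha0 : a.val ≠ 0 := fun h => h0 ((ZMod.val_eq_zero a).1 h)
    rcases le_or_gt a.val x.val with h | h
    · rw [if_pos h, show x.val + (m - a.val) = (x.val - a.val) + m by omega,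
        Nat.add_mod_right, Nat.mod_eq_of_lt (by omega)]
    · rw [if_neg (by omega), Nat.mod_eq_of_lt (by omega)]
      omega

lemma inArcIff {m : ℕ} [NeZero m] (t a b x : ZMod m) :
    InArc a b x ↔
      (0 < (if (a - t).val ≤ (x - t).val then (x - t).val - (a - t).val
              else (x - t).val + m - (a - t).val) ∧
        (if (a - t).val ≤ (x - t).val then (x - t).val - (a - t).val
              else (x - t).val + m - (a - t).val) <
          (if (a - t).val ≤ (b - t).val then (b - t).val - (a - t).val
              else (b - t).val + m - (a - t).val)) := by
  unfold InArc
  rw [show x - a = x - t - (a - t) by ring, show b - a = b - t - (a - t) by ring,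
    valSub (x - t) (a - t), valSub (b - t) (a - t)]

section Arcs
variable {m : ℕ} [NeZero m] {i j : ZMod m}

lemma arcA1 (hj1 : (j + 1 - i).val = (j - i).val + 1) (x : ZMod m) :
    InArc i (j + 1) x ↔ 0 < (x - i).val ∧ (x - i).val < (j - i).val + 1 := by
  rw [inArcIff i]
  simp only [sub_self, ZMod.val_zero, hj1]
  have := ZMod.val_lt (x - i)
  split_ifs <;> omega

lemma arcA2 (hj1 : (j + 1 - i).val = (j - i).val + 1) (hm : (j - i).val + 1 < m) (x : ZMod m) :
    InArc (j + 1) i x ↔ (j - i).val + 1 < (x - i).val := by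
  rw [inArcIff i]
  simp only [sub_self, ZMod.val_zero, hj1]
  have := ZMod.val_lt (x - i)
  split_ifs <;> omega

lemma arcB1 (h1 : (i + 1 - i).val = 1) (hj : 1 < (j - i).val) (x : ZMod m) :
    InArc (i + 1) j x ↔ 1 < (x - i).val ∧ (x - i).val < (j - i).val := by
  rw [inArcIff i]
  simp only [h1]
  have := ZMod.val_lt (x - i)
  have := ZMod.val_lt (j - i)
  split_ifs <;> omega

lemma arcB2 (h1 : (i + 1 - i).val = 1) (hj : 1 < (j - i).val) (x : ZMod m) :
    InArc j (i + 1) x ↔ ((j - i).val < (x - i).val ∨ (x - i).val = 0) := by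
  rw [inArcIff i]
  simp only [h1]
  have := ZMod.val_lt (x - i)
  have := ZMod.val_lt (j - i)
  split_ifs <;> omega

lemma arcAdj1 (h1 : (i + 1 - i).val = 1) (a b : ZMod m)
    (ha0 : (a - i).val ≠ 0) (ha1 : (a - i).val ≠ 1)
    (hb0 : (b - i).val ≠ 0) (hb1 : (b - i).val ≠ 1) :
    InArc a b i ↔ InArc a b (i + 1) := by
  rw [inArcIff i, inArcIff i]
  simp only [sub_self, ZMod.val_zero, h1]
  have := ZMod.val_lt (a - i)
  have := ZMod.val_lt (b - i)
  split_ifs <;> omega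

lemma arcAdj2 (hj1 : (j + 1 - i).val = (j - i).val + 1) (hm : (j - i).val + 1 < m)
    (a b : ZMod m)
    (ha0 : (a - i).val ≠ (j - i).val) (ha1 : (a - i).val ≠ (j - i).val + 1)
    (hb0 : (b - i).val ≠ (j - i).val) (hb1 : (b - i).val ≠ (j - i).val + 1) :
    InArc a b j ↔ InArc a b (j + 1) := by
  rw [inArcIff i, inArcIff i]
  simp only [hj1]
  have := ZMod.val_lt (a - i)
  have := ZMod.val_lt (b - i)
  have := ZMod.val_lt (j - i)
  split_ifs <;> omega

lemma arcEq1 (h1 : (i + 1 - i).val = 1) (hj : 1 < (j - i).val)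
    (hj1 : (j + 1 - i).val = (j - i).val + 1) (x : ZMod m)
    (hx0 : (x - i).val ≠ 0) (hx1 : (x - i).val ≠ 1)
    (hxj : (x - i).val ≠ (j - i).val) (hxj1 : (x - i).val ≠ (j - i).val + 1) :
    InArc i (j + 1) x ↔ InArc (i + 1) j x := by
  rw [arcA1 hj1, arcB1 h1 hj]
  omega

lemma arcEq2 (h1 : (i + 1 - i).val = 1) (hj : 1 < (j - i).val)
    (hj1 : (j + 1 - i).val = (j - i).val + 1) (hm : (j - i).val + 1 < m) (x : ZMod m)
    (hx0 : (x - i).val ≠ 0) (hx1 : (x - i).val ≠ 1)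
    (hxj : (x - i).val ≠ (j - i).val) (hxj1 : (x - i).val ≠ (j - i).val + 1) :
    InArc (j + 1) i x ↔ InArc j (i + 1) x := by
  rw [arcA2 hj1 hm, arcB2 h1 hj]
  omega

end Arcs

/-- `x` avoids the four distinguished points, in relative-value form. -/
def AvoidPt {m : ℕ} (i j x : ZMod m) : Prop :=
  (x - i).val ≠ 0 ∧ (x - i).val ≠ 1 ∧ (x - i).val ≠ (j - i).val ∧ (x - i).val ≠ (j - i).val + 1

section Cross
variable {m : ℕ} [NeZero m] {i j : ZMod m}

lemma notCross (h1 : (i + 1 - i).val = 1) (hj : 1 < (j - i).val)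
    (hj1 : (j + 1 - i).val = (j - i).val + 1) (hm : (j - i).val + 1 < m) :
    ¬ Chord.Crosses (s(i, j + 1)) (s(i + 1, j)) := by
  rintro ⟨a, b, c, d, he, hf, hx⟩
  rw [Sym2.eq_iff] at he hf
  obtain ⟨rfl, rfl⟩ | ⟨rfl, rfl⟩ := he <;> obtain ⟨rfl, rfl⟩ | ⟨rfl, rfl⟩ := hf <;>
    · simp only [arcA1 hj1, arcA2 hj1 hm, h1, Xor', Xor] at hx
      omega

lemma crossTransferL (h1 : (i + 1 - i).val = 1) (hj : 1 < (j - i).val)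
    (hj1 : (j + 1 - i).val = (j - i).val + 1) (hm : (j - i).val + 1 < m)
    {γ : Chord m} (hav : ∀ x ∈ γ, AvoidPt i j x) :
    Chord.Crosses (s(i, j + 1)) γ ↔ Chord.Crosses (s(i + 1, j)) γ := by
  constructor
  · rintro ⟨a, b, c, d, he, rfl, hx⟩
    obtain ⟨hc1, hc2, hc3, hc4⟩ := hav c (Sym2.mem_mk_left c d)
    obtain ⟨hd1, hd2, hd3, hd4⟩ := hav d (Sym2.mem_mk_right c d)
    rw [Sym2.eq_iff] at he
    obtain ⟨rfl, rfl⟩ | ⟨rfl, rfl⟩ := he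
    · exact ⟨i + 1, j, c, d, rfl, rfl, by
        rwa [arcEq1 h1 hj hj1 c hc1 hc2 hc3 hc4, arcEq1 h1 hj hj1 d hd1 hd2 hd3 hd4] at hx⟩
    · exact ⟨j, i + 1, c, d, Sym2.eq_swap, rfl, by
        rwa [arcEq2 h1 hj hj1 hm c hc1 hc2 hc3 hc4,
          arcEq2 h1 hj hj1 hm d hd1 hd2 hd3 hd4] at hx⟩
  · rintro ⟨a, b, c, d, he, rfl, hx⟩
    obtain ⟨hc1, hc2, hc3, hc4⟩ := hav c (Sym2.mem_mk_left c d)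
    obtain ⟨hd1, hd2, hd3, hd4⟩ := hav d (Sym2.mem_mk_right c d)
    rw [Sym2.eq_iff] at he
    obtain ⟨rfl, rfl⟩ | ⟨rfl, rfl⟩ := he
    · exact ⟨i, j + 1, c, d, rfl, rfl, by
        rwa [← arcEq1 h1 hj hj1 c hc1 hc2 hc3 hc4, ← arcEq1 h1 hj hj1 d hd1 hd2 hd3 hd4] at hx⟩
    · exact ⟨j + 1, i, c, d, Sym2.eq_swap, rfl, by
        rwa [← arcEq2 h1 hj hj1 hm c hc1 hc2 hc3 hc4,
          ← arcEq2 h1 hj hj1 hm d hd1 hd2 hd3 hd4] at hx⟩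

lemma crossTransferR (h1 : (i + 1 - i).val = 1) (hj : 1 < (j - i).val)
    (hj1 : (j + 1 - i).val = (j - i).val + 1) (hm : (j - i).val + 1 < m)
    {γ : Chord m} (hav : ∀ x ∈ γ, AvoidPt i j x) :
    Chord.Crosses γ (s(i, j + 1)) ↔ Chord.Crosses γ (s(i + 1, j)) := by
  constructor
  · rintro ⟨a, b, c, d, rfl, hf, hx⟩
    obtain ⟨ha1, ha2, ha3, ha4⟩ := hav a (Sym2.mem_mk_left a b)
    obtain ⟨hb1, hb2, hb3, hb4⟩ := hav b (Sym2.mem_mk_right a b)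
    rw [Sym2.eq_iff] at hf
    obtain ⟨rfl, rfl⟩ | ⟨rfl, rfl⟩ := hf
    · exact ⟨a, b, i + 1, j, rfl, rfl, by
        rwa [arcAdj1 h1 a b ha1 ha2 hb1 hb2, ← arcAdj2 hj1 hm a b ha3 ha4 hb3 hb4] at hx⟩
    · exact ⟨a, b, j, i + 1, rfl, Sym2.eq_swap, by
        rwa [arcAdj1 h1 a b ha1 ha2 hb1 hb2, ← arcAdj2 hj1 hm a b ha3 ha4 hb3 hb4] at hx⟩
  · rintro ⟨a, b, c, d, rfl, hf, hx⟩
    obtain ⟨ha1, ha2, ha3, ha4⟩ := hav a (Sym2.mem_mk_left a b)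
    obtain ⟨hb1, hb2, hb3, hb4⟩ := hav b (Sym2.mem_mk_right a b)
    rw [Sym2.eq_iff] at hf
    obtain ⟨rfl, rfl⟩ | ⟨rfl, rfl⟩ := hf
    · exact ⟨a, b, i, j + 1, rfl, rfl, by
        rwa [← arcAdj1 h1 a b ha1 ha2 hb1 hb2, arcAdj2 hj1 hm a b ha3 ha4 hb3 hb4] at hx⟩
    · exact ⟨a, b, j + 1, i, rfl, Sym2.eq_swap, by
        rwa [← arcAdj1 h1 a b ha1 ha2 hb1 hb2, arcAdj2 hj1 hm a b ha3 ha4 hb3 hb4] at hx⟩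

end Cross

end Aux

/-- deleting a strong RII pair `α = {i, j+1}`, `β = {i+1, j}` changes the
triple-chord count `T` by an even number. -/

theorem strong_RII_changes_T_by_even (n : ℕ) (D : ChordDiagram (n + 2)) (D' : ChordDiagram n)
    (i j : ZMod (2 * (n + 2)))
    (hord : CyclicOrd4 i (i + 1) j (j + 1))
    (hα : s(i, j + 1) ∈ D.chords) (hβ : s(i + 1, j) ∈ D.chords)
    (hdel : D.DeletionOf {s(i, j + 1), s(i + 1, j)} D') :
    D.T ≡ D'.T [MOD 2] := by
  classical
  haveI : NeZero (2 * (n + 2)) := ⟨by omega⟩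
  haveI : Fact (1 < 2 * (n + 2)) := ⟨by omega⟩
  obtain ⟨ho1, ho2, ho3⟩ := hord
  have h1 : (i + 1 - i).val = 1 := by
    rw [add_sub_cancel_left]; exact ZMod.val_one _
  have hj : 1 < (j - i).val := by rwa [h1] at ho2
  have e1 : (j + 1 - i).val = ((j - i).val + 1) % (2 * (n + 2)) := by
    rw [show j + 1 - i = (j - i) + 1 by ring, ZMod.val_add, ZMod.val_one]
  have hjv := ZMod.val_lt (j - i)
  have hj1 : (j + 1 - i).val = (j - i).val + 1 := by
    rcases Nat.lt_or_ge ((j - i).val + 1) (2 * (n + 2)) with h | h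
    · rw [e1, Nat.mod_eq_of_lt h]
    · exfalso
      have hh : (j - i).val + 1 = 2 * (n + 2) := by omega
      rw [e1, hh, Nat.mod_self] at ho3
      omega
  have hm2 : (j - i).val + 1 < 2 * (n + 2) := by
    have := ZMod.val_lt (j + 1 - i); omega
  have vne : ∀ x y : ZMod (2 * (n + 2)), x ≠ y → (x - i).val ≠ (y - i).val := by
    intro x y hxy hv
    exact hxy (by have := ZMod.val_injective _ hv; rwa [sub_left_inj] at this)
  have avoid_of_ne : ∀ x : ZMod (2 * (n + 2)),
      x ≠ i → x ≠ i + 1 → x ≠ j → x ≠ j + 1 → AvoidPt i j x := by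
    intro x n1 n2 n3 n4
    refine ⟨?_, ?_, ?_, ?_⟩
    · have := vne x i n1; rwa [sub_self, ZMod.val_zero] at this
    · have := vne x (i + 1) n2; rwa [h1] at this
    · exact vne x j n3
    · have := vne x (j + 1) n4; rwa [hj1] at this
  have invfacts : D.inv i = j + 1 ∧ D.inv (j + 1) = i := by
    obtain ⟨y, hy⟩ := hα
    rw [Sym2.eq_iff] at hy
    rcases hy with ⟨h, h'⟩ | ⟨h, h'⟩
    · subst h; exact ⟨h'.symm, by rw [h']; exact D.involutive i⟩
    · subst h'; exact ⟨by rw [h]; exact D.involutive _, h.symm⟩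
  have invfacts2 : D.inv (i + 1) = j ∧ D.inv j = i + 1 := by
    obtain ⟨y, hy⟩ := hβ
    rw [Sym2.eq_iff] at hy
    rcases hy with ⟨h, h'⟩ | ⟨h, h'⟩
    · subst h; exact ⟨h'.symm, by rw [h']; exact D.involutive _⟩
    · subst h'; exact ⟨by rw [h]; exact D.involutive _, h.symm⟩
  have chord_avoid : ∀ γ ∈ D.chords, γ ≠ s(i, j + 1) → γ ≠ s(i + 1, j) →
      ∀ x ∈ γ, AvoidPt i j x := by
    rintro γ ⟨y, rfl⟩ hne1 hne2 x hx
    have hγ : s(y, D.inv y) = s(x, D.inv x) := by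
      rcases Sym2.mem_iff.1 hx with rfl | rfl
      · rfl
      · rw [D.involutive]; exact Sym2.eq_swap
    apply avoid_of_ne x
    · rintro rfl; exact hne1 (by rw [hγ, invfacts.1])
    · rintro rfl; exact hne2 (by rw [hγ, invfacts2.1])
    · rintro rfl; refine hne2 ?_; rw [hγ, invfacts2.2]; exact Sym2.eq_swap
    · rintro rfl; refine hne1 ?_; rw [hγ, invfacts.2]; exact Sym2.eq_swap
  have hαβ : (s(i, j + 1) : Chord (2 * (n + 2))) ≠ s(i + 1, j) := by
    intro h
    rw [Sym2.eq_iff] at h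
    rcases h with ⟨h, h'⟩ | ⟨h, h'⟩
    · have h2 := congrArg (fun z : ZMod (2 * (n + 2)) => (z - i).val) h
      simp only [sub_self, ZMod.val_zero, h1] at h2
      omega
    · have h2 := congrArg (fun z : ZMod (2 * (n + 2)) => (z - i).val) h
      simp only [sub_self, ZMod.val_zero] at h2
      omega
  set α : Chord (2 * (n + 2)) := s(i, j + 1) with hαdef
  set β : Chord (2 * (n + 2)) := s(i + 1, j) with hβdef
  obtain ⟨φ, hφ⟩ := hdel
  have hnc : ¬ Chord.Crosses α β := notCross h1 hj hj1 hm2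
  have trL : ∀ γ ∈ D.chords, γ ≠ α → γ ≠ β → (Chord.Crosses α γ ↔ Chord.Crosses β γ) :=
    fun γ hγ hn1 hn2 => crossTransferL h1 hj hj1 hm2 (chord_avoid γ hγ hn1 hn2)
  have trR : ∀ γ ∈ D.chords, γ ≠ α → γ ≠ β → (Chord.Crosses γ α ↔ Chord.Crosses γ β) :=
    fun γ hγ hn1 hn2 => crossTransferR h1 hj hj1 hm2 (chord_avoid γ hγ hn1 hn2)
  have key1 : ∀ P, D.IsTripleChord P → α ∈ P → β ∉ P := by
    rintro P ⟨hc, hmem, hcr⟩ hαP hβP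
    exact hnc (hcr _ hαP _ hβP hαβ)
  have key2 : ∀ P, D.IsTripleChord P → β ∈ P → α ∉ P := by
    rintro P ⟨hc, hmem, hcr⟩ hβP hαP
    exact hnc (hcr _ hαP _ hβP hαβ)
  -- the swap between triples containing α and triples containing β
  have swap_mem : ∀ P, D.IsTripleChord P → α ∈ P →
      D.IsTripleChord (insert β (P.erase α)) ∧ β ∈ insert β (P.erase α) := by
    intro P hP hαP
    obtain ⟨hc, hmem, hcr⟩ := hP
    have hβP : β ∉ P := key1 P ⟨hc, hmem, hcr⟩ hαP
    have hβe : β ∉ P.erase α := fun h => hβP (Finset.mem_of_mem_erase h)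
    refine ⟨⟨?_, ?_, ?_⟩, Finset.mem_insert_self _ _⟩
    · rw [Finset.card_insert_of_notMem hβe, Finset.card_erase_of_mem hαP, hc]
    · intro e he
      rcases Finset.mem_insert.1 he with rfl | he'
      · exact hβ
      · exact hmem e (Finset.mem_of_mem_erase he')
    · intro e he f hf hef
      rcases Finset.mem_insert.1 he with rfl | he' <;>
        rcases Finset.mem_insert.1 hf with rfl | hf'
      · exact absurd rfl hef
      · have hfP := Finset.mem_of_mem_erase hf'
        have hfα : f ≠ α := Finset.ne_of_mem_erase hf'
        have hfβ : f ≠ β := fun h => hβP (h ▸ hfP)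
        exact (trL f (hmem f hfP) hfα hfβ).1 (hcr α hαP f hfP (Ne.symm hfα))
      · have heP := Finset.mem_of_mem_erase he'
        have heα : e ≠ α := Finset.ne_of_mem_erase he'
        have heβ : e ≠ β := fun h => hβP (h ▸ heP)
        exact (trR e (hmem e heP) heα heβ).1 (hcr e heP α hαP heα)
      · exact hcr e (Finset.mem_of_mem_erase he') f (Finset.mem_of_mem_erase hf') hef
  have swap_mem' : ∀ Q, D.IsTripleChord Q → β ∈ Q →
      D.IsTripleChord (insert α (Q.erase β)) ∧ α ∈ insert α (Q.erase β) := by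
    intro Q hQ hβQ
    obtain ⟨hc, hmem, hcr⟩ := hQ
    have hαQ : α ∉ Q := key2 Q ⟨hc, hmem, hcr⟩ hβQ
    have hαe : α ∉ Q.erase β := fun h => hαQ (Finset.mem_of_mem_erase h)
    refine ⟨⟨?_, ?_, ?_⟩, Finset.mem_insert_self _ _⟩
    · rw [Finset.card_insert_of_notMem hαe, Finset.card_erase_of_mem hβQ, hc]
    · intro e he
      rcases Finset.mem_insert.1 he with rfl | he'
      · exact hα
      · exact hmem e (Finset.mem_of_mem_erase he')
    · intro e he f hf hef
      rcases Finset.mem_insert.1 he with rfl | he' <;>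
        rcases Finset.mem_insert.1 hf with rfl | hf'
      · exact absurd rfl hef
      · have hfP := Finset.mem_of_mem_erase hf'
        have hfβ : f ≠ β := Finset.ne_of_mem_erase hf'
        have hfα : f ≠ α := fun h => hαQ (h ▸ hfP)
        exact (trL f (hmem f hfP) hfα hfβ).2 (hcr β hβQ f hfP (Ne.symm hfβ))
      · have heP := Finset.mem_of_mem_erase he'
        have heβ : e ≠ β := Finset.ne_of_mem_erase he'
        have heα : e ≠ α := fun h => hαQ (h ▸ heP)
        exact (trR e (hmem e heP) heα heβ).2 (hcr e heP β hβQ heβ)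
      · exact hcr e (Finset.mem_of_mem_erase he') f (Finset.mem_of_mem_erase hf') hef
  have hS12 : Set.ncard {P | D.IsTripleChord P ∧ α ∈ P}
      = Set.ncard {P | D.IsTripleChord P ∧ β ∈ P} := by
    have himg : (fun P => insert β (P.erase α)) '' {P | D.IsTripleChord P ∧ α ∈ P}
        = {P | D.IsTripleChord P ∧ β ∈ P} := by
      ext Q
      constructor
      · rintro ⟨P, ⟨hP, hαP⟩, rfl⟩
        exact swap_mem P hP hαP
      · rintro ⟨hQ, hβQ⟩
        refine ⟨insert α (Q.erase β), swap_mem' Q hQ hβQ, ?_⟩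
        have hαQ : α ∉ Q := key2 Q hQ hβQ
        have hα' : α ∉ Q.erase β := fun h => hαQ (Finset.mem_of_mem_erase h)
        simp only
        rw [Finset.erase_insert hα', Finset.insert_erase hβQ]
    have hinj : Set.InjOn (fun P => insert β (P.erase α))
        {P | D.IsTripleChord P ∧ α ∈ P} := by
      rintro P ⟨hP, hαP⟩ P' ⟨hP', hαP'⟩ hEq
      have hβP : β ∉ P.erase α :=
        fun h => key1 P hP hαP (Finset.mem_of_mem_erase h)
      have hβP' : β ∉ P'.erase α :=
        fun h => key1 P' hP' hαP' (Finset.mem_of_mem_erase h)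
      have hEE : P.erase α = P'.erase α := by
        have h2 := congrArg (fun s => Finset.erase s β) hEq
        simpa [Finset.erase_insert hβP, Finset.erase_insert hβP'] using h2
      calc P = insert α (P.erase α) := (Finset.insert_erase hαP).symm
        _ = insert α (P'.erase α) := by rw [hEE]
        _ = P' := Finset.insert_erase hαP'
    rw [← himg, Set.ncard_image_of_injOn hinj]
  -- the bijection with triples of D'
  have hS0 : Set.ncard {P | D.IsTripleChord P ∧ α ∉ P ∧ β ∉ P} = D'.T := by
    set g0 : Chord (2 * (n + 2)) → Chord (2 * n) :=
      fun e => if h : e ∈ D.chords ∧ e ∉ ({α, β} : Set (Chord (2 * (n + 2)))) then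
        (φ ⟨e, h⟩).1 else s(0, 0) with hg0def
    have hg0 : ∀ e (h : e ∈ D.chords ∧ e ∉ ({α, β} : Set (Chord (2 * (n + 2))))),
        g0 e = (φ ⟨e, h⟩).1 := fun e h => dif_pos h
    have g0inj : ∀ e (he : e ∈ D.chords ∧ e ∉ ({α, β} : Set (Chord (2 * (n + 2)))))
        e' (he' : e' ∈ D.chords ∧ e' ∉ ({α, β} : Set (Chord (2 * (n + 2))))),
        g0 e = g0 e' → e = e' := by
      intro e he e' he' h
      rw [hg0 e he, hg0 e' he'] at h
      have h2 := φ.injective (Subtype.ext h)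
      exact congrArg Subtype.val h2
    have hdom : ∀ R : Finset (Chord (2 * (n + 2))), D.IsTripleChord R → α ∉ R → β ∉ R →
        ∀ e ∈ R, e ∈ D.chords ∧ e ∉ ({α, β} : Set (Chord (2 * (n + 2)))) := by
      intro R hR hαR hβR e heR
      obtain ⟨_, hmem, _⟩ := hR
      refine ⟨hmem e heR, ?_⟩
      intro hm3
      rcases Set.mem_insert_iff.1 hm3 with rfl | hm4
      · exact hαR heR
      · rw [Set.mem_singleton_iff] at hm4; subst hm4; exact hβR heR
    have fwd : ∀ P, D.IsTripleChord P → α ∉ P → β ∉ P →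
        D'.IsTripleChord (P.image g0) := by
      intro P hP hαP hβP
      obtain ⟨hc, hmem, hcr⟩ := hP
      have hd := hdom P ⟨hc, hmem, hcr⟩ hαP hβP
      have hinjP : Set.InjOn g0 P := fun e he e' he' h =>
        g0inj e (hd e he) e' (hd e' he') h
      refine ⟨?_, ?_, ?_⟩
      · rw [Finset.card_image_of_injOn hinjP, hc]
      · intro e' he'
        obtain ⟨e, heP, rfl⟩ := Finset.mem_image.1 he'
        rw [hg0 e (hd e heP)]
        exact (φ ⟨e, hd e heP⟩).2
      · intro e' he' f' hf' hne
        obtain ⟨e, heP, rfl⟩ := Finset.mem_image.1 he'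
        obtain ⟨f, hfP, rfl⟩ := Finset.mem_image.1 hf'
        have hef : e ≠ f := fun h => hne (congrArg g0 h)
        have h3 := (hφ ⟨e, hd e heP⟩ ⟨f, hd f hfP⟩).1 (hcr e heP f hfP hef)
        rwa [hg0 e (hd e heP), hg0 f (hd f hfP)]
    set g1 : Chord (2 * n) → Chord (2 * (n + 2)) :=
      fun f => if h : f ∈ D'.chords then (φ.symm ⟨f, h⟩).1 else s(0, 0) with hg1def
    have hg1 : ∀ f (h : f ∈ D'.chords), g1 f = (φ.symm ⟨f, h⟩).1 := fun f h => dif_pos h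
    have hg0g1 : ∀ f (h : f ∈ D'.chords), g0 (g1 f) = f := by
      intro f h
      have hmem' := (φ.symm ⟨f, h⟩).2
      rw [hg1 f h, hg0 _ hmem']
      have h4 : (⟨(φ.symm ⟨f, h⟩).1, hmem'⟩ :
          {e // e ∈ D.chords ∧ e ∉ ({α, β} : Set (Chord (2 * (n + 2))))}) = φ.symm ⟨f, h⟩ :=
        rfl
      rw [h4, Equiv.apply_symm_apply]
    have bwd : ∀ Q, D'.IsTripleChord Q →
        (D.IsTripleChord (Q.image g1) ∧ α ∉ Q.image g1 ∧ β ∉ Q.image g1) ∧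
          (Q.image g1).image g0 = Q := by
      intro Q hQ
      obtain ⟨hc, hmem, hcr⟩ := hQ
      have hinjQ : Set.InjOn g1 Q := by
        intro f hf f' hf' h
        have h5 := congrArg g0 h
        rwa [hg0g1 f (hmem f hf), hg0g1 f' (hmem f' hf')] at h5
      have himgQ : (Q.image g1).image g0 = Q := by
        rw [Finset.image_image]
        have h6 : Finset.image (g0 ∘ g1) Q = Finset.image id Q :=
          Finset.image_congr (fun x hx => hg0g1 x (hmem x hx))
        rw [h6, Finset.image_id]
      refine ⟨⟨⟨?_, ?_, ?_⟩, ?_, ?_⟩, himgQ⟩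
      · rw [Finset.card_image_of_injOn hinjQ, hc]
      · intro e he
        obtain ⟨f, hfQ, rfl⟩ := Finset.mem_image.1 he
        rw [hg1 f (hmem f hfQ)]
        exact ((φ.symm ⟨f, hmem f hfQ⟩).2).1
      · intro e he e2 he2 hne
        obtain ⟨f, hfQ, rfl⟩ := Finset.mem_image.1 he
        obtain ⟨f2, hf2Q, rfl⟩ := Finset.mem_image.1 he2
        have hff : f ≠ f2 := fun h => hne (congrArg g1 h)
        have h7 := hφ (φ.symm ⟨f, hmem f hfQ⟩) (φ.symm ⟨f2, hmem f2 hf2Q⟩)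
        rw [Equiv.apply_symm_apply, Equiv.apply_symm_apply] at h7
        have h8 := h7.2 (hcr f hfQ f2 hf2Q hff)
        rwa [hg1 f (hmem f hfQ), hg1 f2 (hmem f2 hf2Q)]
      · intro hmemα
        obtain ⟨f, hfQ, hfe⟩ := Finset.mem_image.1 hmemα
        have hp := (φ.symm ⟨f, hmem f hfQ⟩).2.2
        rw [hg1 f (hmem f hfQ)] at hfe
        exact hp (by rw [hfe]; exact Set.mem_insert _ _)
      · intro hmemβ
        obtain ⟨f, hfQ, hfe⟩ := Finset.mem_image.1 hmemβ
        have hp := (φ.symm ⟨f, hmem f hfQ⟩).2.2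
        rw [hg1 f (hmem f hfQ)] at hfe
        exact hp (by rw [hfe]; exact Set.mem_insert_of_mem _ rfl)
    have himg : Finset.image g0 '' {P | D.IsTripleChord P ∧ α ∉ P ∧ β ∉ P}
        = {Q | D'.IsTripleChord Q} := by
      ext Q
      constructor
      · rintro ⟨P, ⟨hP, hα', hβ'⟩, rfl⟩
        exact fwd P hP hα' hβ'
      · intro hQ
        exact ⟨Q.image g1, (bwd Q hQ).1, (bwd Q hQ).2⟩
    have hinj : Set.InjOn (Finset.image g0)
        {P | D.IsTripleChord P ∧ α ∉ P ∧ β ∉ P} := by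
      rintro P ⟨hP, hα1, hβ1⟩ P' ⟨hP', hα2, hβ2⟩ hEq
      apply Finset.Subset.antisymm <;> intro e he
      · have hd1 := hdom P hP hα1 hβ1 e he
        have h9 : g0 e ∈ P'.image g0 := by
          rw [← hEq]; exact Finset.mem_image_of_mem _ he
        obtain ⟨f, hfP', hf⟩ := Finset.mem_image.1 h9
        have h10 := g0inj f (hdom P' hP' hα2 hβ2 f hfP') e hd1 hf
        rwa [← h10]
      · have hd1 := hdom P' hP' hα2 hβ2 e he
        have h9 : g0 e ∈ P.image g0 := by
          rw [hEq]; exact Finset.mem_image_of_mem _ he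
        obtain ⟨f, hfP, hf⟩ := Finset.mem_image.1 h9
        have h10 := g0inj f (hdom P hP hα1 hβ1 f hfP) e hd1 hf
        rwa [← h10]
    calc Set.ncard {P | D.IsTripleChord P ∧ α ∉ P ∧ β ∉ P}
        = Set.ncard (Finset.image g0 '' {P | D.IsTripleChord P ∧ α ∉ P ∧ β ∉ P}) :=
          (Set.ncard_image_of_injOn hinj).symm
      _ = D'.T := by rw [himg]; rfl
  have hsplit : {P | D.IsTripleChord P} =
      ({P | D.IsTripleChord P ∧ α ∉ P ∧ β ∉ P} ∪
        ({P | D.IsTripleChord P ∧ α ∈ P} ∪ {P | D.IsTripleChord P ∧ β ∈ P})) := by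
    ext P
    simp only [Set.mem_setOf_eq, Set.mem_union]
    constructor
    · intro h
      by_cases h1' : α ∈ P
      · exact Or.inr (Or.inl ⟨h, h1'⟩)
      · by_cases h2' : β ∈ P
        · exact Or.inr (Or.inr ⟨h, h2'⟩)
        · exact Or.inl ⟨h, h1', h2'⟩
    · rintro (⟨h, _⟩ | ⟨h, _⟩ | ⟨h, _⟩) <;> exact h
  have hd1 : Disjoint {P | D.IsTripleChord P ∧ α ∉ P ∧ β ∉ P}
      ({P | D.IsTripleChord P ∧ α ∈ P} ∪ {P | D.IsTripleChord P ∧ β ∈ P}) := by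
    rw [Set.disjoint_left]
    rintro P ⟨_, hα', hβ'⟩ (⟨_, h⟩ | ⟨_, h⟩)
    exacts [hα' h, hβ' h]
  have hd2 : Disjoint {P | D.IsTripleChord P ∧ α ∈ P} {P | D.IsTripleChord P ∧ β ∈ P} := by
    rw [Set.disjoint_left]
    rintro P ⟨hP, hα'⟩ ⟨_, hβ'⟩
    exact key1 P hP hα' hβ'
  have hT : D.T = Set.ncard {P | D.IsTripleChord P ∧ α ∉ P ∧ β ∉ P}
      + (Set.ncard {P | D.IsTripleChord P ∧ α ∈ P}
        + Set.ncard {P | D.IsTripleChord P ∧ β ∈ P}) := by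
    rw [ChordDiagram.T, hsplit, Set.ncard_union_eq hd1 (Set.toFinite _) (Set.toFinite _),
      Set.ncard_union_eq hd2 (Set.toFinite _) (Set.toFinite _)]
  show D.T % 2 = D'.T % 2
  omega
end
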